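/- (Tropical cofactor expansion / block identity) Let A be an n×n matrix over a totally ordered commutative group extended with −∞, and let I ⊆ [1,n]. Then the tropical determinant satisfies |A|_T = max over subsets J ⊆ [1,n] with #J = #I of (|A_{I,J}|_T + |A_{Ī,J̄}|_T), where Ī, J̄ denote complements and A_{I,J} is the submatrix with rows in I and columns in J. -/

import Mathlib

open Finset

/-- Tropical determinant of the submatrix of `A` with rows in `I` and columns
in `J`: the maximum, over bijections `e : I ≃ J`, of `∑_{i ∈ I} A i (e i)`,
with value `⊥ = −∞` when no bijection exists (and `0` for the empty matrix). -/
noncomputable def tdetSub {n : ℕ} {M : Type*} [AddCommGroup M] [LinearOrder M] [IsOrderedAddMonoid M]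
    (A : Fin n → Fin n → WithBot M) (I J : Finset (Fin n)) : WithBot M :=
  (Finset.univ : Finset (↥I ≃ ↥J)).sup fun e => ∑ i : ↥I, A i (e i)

private lemma sup_univ_equiv' {α β γ : Type*} [Fintype α] [Fintype β]
    [SemilatticeSup γ] [OrderBot γ] (f : α → γ) (e : β ≃ α) :
    (Finset.univ : Finset α).sup f = (Finset.univ : Finset β).sup (fun b => f (e b)) := by
  apply le_antisymm
  · exact Finset.sup_le fun a _ => by
      simpa using Finset.le_sup (f := fun b => f (e b)) (Finset.mem_univ (e.symm a))
  · exact Finset.sup_le fun b _ => Finset.le_sup (Finset.mem_univ (e b))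

/-- Tropical cofactor / block expansion: for every row set `I`,
`|A|_T = max_{#J = #I} (|A_{I,J}|_T + |A_{Ī,J̄}|_T)`. -/
theorem tropDet_block_expansion {n : ℕ} {M : Type*} [AddCommGroup M] [LinearOrder M] [IsOrderedAddMonoid M]
    (A : Fin n → Fin n → WithBot M) (I : Finset (Fin n)) :
    tdetSub A Finset.univ Finset.univ =
      ((Finset.univ : Finset (Fin n)).powerset.filter fun J => J.card = I.card).sup
        fun J => tdetSub A I J + tdetSub A Iᶜ Jᶜ := by
  classical
  set u : ↥(Finset.univ : Finset (Fin n)) ≃ Fin n :=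
    Equiv.subtypeUnivEquiv (fun x => Finset.mem_univ x) with hu
  have hL : tdetSub A Finset.univ Finset.univ =
      (Finset.univ : Finset (Equiv.Perm (Fin n))).sup (fun τ => ∑ i, A i (τ i)) := by
    rw [tdetSub, sup_univ_equiv' _ (Equiv.equivCongr u.symm u.symm)]
    apply Finset.sup_congr rfl
    intro τ _
    rw [← Finset.sum_coe_sort Finset.univ (fun i => A i (τ i))]
    rfl
  rw [hL]
  apply le_antisymm
  · apply Finset.sup_le
    intro τ _
    set J : Finset (Fin n) := I.image τ with hJdef
    have hiff : ∀ i, i ∈ I ↔ τ i ∈ J := fun i =>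
      ⟨fun h => Finset.mem_image_of_mem τ h, fun h => by
        obtain ⟨a, ha, hae⟩ := Finset.mem_image.mp h
        rwa [← τ.injective hae]⟩
    have hJmem : J ∈ (Finset.univ : Finset (Fin n)).powerset.filter
        fun J => J.card = I.card := by
      simp [hJdef, Finset.card_image_of_injective I τ.injective]
    set e : ↥I ≃ ↥J := Equiv.subtypeEquiv τ hiff with he
    set f : ↥Iᶜ ≃ ↥Jᶜ := Equiv.subtypeEquiv τ
      (fun i => by simp [Finset.mem_compl, hiff i]) with hf
    have h1 : ∑ i ∈ I, A i (τ i) = ∑ i : ↥I, A i (e i) := by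
      rw [← Finset.sum_coe_sort I (fun i => A i (τ i))]
      rfl
    have h2 : ∑ i ∈ Iᶜ, A i (τ i) = ∑ i : ↥Iᶜ, A i (f i) := by
      rw [← Finset.sum_coe_sort Iᶜ (fun i => A i (τ i))]
      rfl
    calc ∑ i, A i (τ i) = ∑ i ∈ I, A i (τ i) + ∑ i ∈ Iᶜ, A i (τ i) :=
          (Finset.sum_add_sum_compl I _).symm
      _ ≤ tdetSub A I J + tdetSub A Iᶜ Jᶜ := by
          rw [h1, h2, tdetSub, tdetSub]
          exact add_le_add
            (Finset.le_sup (f := fun e : ↥I ≃ ↥J => ∑ i : ↥I, A i (e i))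
              (Finset.mem_univ e))
            (Finset.le_sup (f := fun f : ↥Iᶜ ≃ ↥Jᶜ => ∑ i : ↥Iᶜ, A i (f i))
              (Finset.mem_univ f))
      _ ≤ _ := Finset.le_sup (f := fun J => tdetSub A I J + tdetSub A Iᶜ Jᶜ) hJmem
  · apply Finset.sup_le
    intro J hJ
    have hcard : J.card = I.card := (Finset.mem_filter.mp hJ).2
    have hcard' : Fintype.card ↥I = Fintype.card ↥J := by
      simp [Fintype.card_coe, hcard]
    have hcardc : Fintype.card ↥Iᶜ = Fintype.card ↥Jᶜ := by
      simp [Fintype.card_coe, Finset.card_compl, hcard]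
    haveI hne1 : Nonempty (↥I ≃ ↥J) := ⟨Fintype.equivOfCardEq hcard'⟩
    haveI hne2 : Nonempty (↥Iᶜ ≃ ↥Jᶜ) := ⟨Fintype.equivOfCardEq hcardc⟩
    obtain ⟨e0, _, hesup⟩ := Finset.exists_mem_eq_sup
      (Finset.univ : Finset (↥I ≃ ↥J)) Finset.univ_nonempty
      (fun e => ∑ i : ↥I, A i (e i))
    obtain ⟨f0, _, hfsup⟩ := Finset.exists_mem_eq_sup
      (Finset.univ : Finset (↥Iᶜ ≃ ↥Jᶜ)) Finset.univ_nonempty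
      (fun f => ∑ i : ↥Iᶜ, A i (f i))
    rw [tdetSub, tdetSub, hesup, hfsup]
    -- combine e0 and f0 into a permutation
    set eqI : ↥Iᶜ ≃ {x : Fin n // x ∉ I} :=
      Equiv.subtypeEquivRight (fun x => Finset.mem_compl) with heqI
    set eqJ : ↥Jᶜ ≃ {x : Fin n // x ∉ J} :=
      Equiv.subtypeEquivRight (fun x => Finset.mem_compl) with heqJ
    set f' : {x : Fin n // x ∉ I} ≃ {x : Fin n // x ∉ J} :=
      (eqI.symm.trans f0).trans eqJ with hf'
    set τ : Equiv.Perm (Fin n) :=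
      ((Equiv.sumCompl (· ∈ I)).symm.trans (Equiv.sumCongr e0 f')).trans
        (Equiv.sumCompl (· ∈ J)) with hτ
    have hτ₁ : ∀ (i : ↥I), τ ↑i = ↑(e0 i) := by
      intro i
      simp [hτ, Equiv.sumCompl_symm_apply_of_pos i.2]
    have hτ₂ : ∀ (i : ↥Iᶜ), τ ↑i = ↑(f0 i) := by
      intro i
      have hi : (i : Fin n) ∉ I := Finset.mem_compl.mp i.2
      have hii : eqI.symm ⟨(i : Fin n), hi⟩ = i := Subtype.ext rfl
      simp [hτ, hf', heqJ, Equiv.sumCompl_symm_apply_of_neg hi, hii]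
    have h1 : ∑ i : ↥I, A i (e0 i) = ∑ i ∈ I, A i (τ i) := by
      rw [← Finset.sum_coe_sort I (fun i => A i (τ i))]
      exact Finset.sum_congr rfl fun i _ => by rw [hτ₁ i]
    have h2 : ∑ i : ↥Iᶜ, A i (f0 i) = ∑ i ∈ Iᶜ, A i (τ i) := by
      rw [← Finset.sum_coe_sort Iᶜ (fun i => A i (τ i))]
      exact Finset.sum_congr rfl fun i _ => by rw [hτ₂ i]
    calc (∑ i : ↥I, A i (e0 i)) + ∑ i : ↥Iᶜ, A i (f0 i)
        = ∑ i ∈ I, A i (τ i) + ∑ i ∈ Iᶜ, A i (τ i) := by rw [h1, h2]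
      _ = ∑ i, A i (τ i) := Finset.sum_add_sum_compl I _
      _ ≤ _ := Finset.le_sup (f := fun τ : Equiv.Perm (Fin n) => ∑ i, A i (τ i)) (Finset.mem_univ τ)
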